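/- If U is a finite connected subset of Z^d with d >= 2 (or more generally a finite connected subset with Z^d \ U having a nonempty infinite component), then the exterior boundary partial^ext U, defined as the inner boundary of the unique infinite connected component of U^c, is a nonempty *-connected subset of Z^d. -/

import Mathlib

open scoped BigOperators

/-- Nearest-neighbor adjacency on `ℤ^d`. -/
def latAdj {d : ℕ} (x y : Fin d → ℤ) : Prop := (∑ i : Fin d, |x i - y i|) = 1

/-- `*`-adjacency on `ℤ^d` (`ℓ^∞`-distance one). -/
def latAdjStar {d : ℕ} (x y : Fin d → ℤ) : Prop := x ≠ y ∧ ∀ i : Fin d, |x i - y i| ≤ 1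

/-- A nearest-neighbor path of length `k` staying in `S`. -/
def IsPathIn {d : ℕ} (S : Set (Fin d → ℤ)) (γ : ℕ → Fin d → ℤ) (k : ℕ) : Prop :=
  (∀ i ≤ k, γ i ∈ S) ∧ ∀ i < k, latAdj (γ i) (γ (i + 1))

/-- `x` and `y` are connected by a nearest-neighbor path inside `S`. -/
def ConnIn {d : ℕ} (S : Set (Fin d → ℤ)) (x y : Fin d → ℤ) : Prop :=
  ∃ (γ : ℕ → Fin d → ℤ) (k : ℕ), IsPathIn S γ k ∧ γ 0 = x ∧ γ k = y

/-- A set is connected if any two of its points are joined by a path within it. -/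
def ConnectedSet {d : ℕ} (S : Set (Fin d → ℤ)) : Prop :=
  ∀ x ∈ S, ∀ y ∈ S, ConnIn S x y

def IsStarPathIn {d : ℕ} (S : Set (Fin d → ℤ)) (γ : ℕ → Fin d → ℤ) (k : ℕ) : Prop :=
  (∀ i ≤ k, γ i ∈ S) ∧ ∀ i < k, latAdjStar (γ i) (γ (i + 1))

def StarConnIn {d : ℕ} (S : Set (Fin d → ℤ)) (x y : Fin d → ℤ) : Prop :=
  ∃ (γ : ℕ → Fin d → ℤ) (k : ℕ), IsStarPathIn S γ k ∧ γ 0 = x ∧ γ k = y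

def StarConnectedSet {d : ℕ} (S : Set (Fin d → ℤ)) : Prop :=
  ∀ x ∈ S, ∀ y ∈ S, StarConnIn S x y

/-- The connected component of `x` within `S`. -/
def connComp {d : ℕ} (S : Set (Fin d → ℤ)) (x : Fin d → ℤ) : Set (Fin d → ℤ) :=
  {y | ConnIn S x y}

def starConnComp {d : ℕ} (S : Set (Fin d → ℤ)) (x : Fin d → ℤ) : Set (Fin d → ℤ) :=
  {y | StarConnIn S x y}

/-- Inner vertex boundary. -/
def innerBd {d : ℕ} (S : Set (Fin d → ℤ)) : Set (Fin d → ℤ) :=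
  {x | x ∈ S ∧ ∃ y, y ∉ S ∧ latAdj x y}

/-- Outer vertex boundary. -/
def outerBd {d : ℕ} (S : Set (Fin d → ℤ)) : Set (Fin d → ℤ) :=
  {x | x ∉ S ∧ ∃ y ∈ S, latAdj x y}

/-- Closure: a set together with its outer boundary. -/
def clo {d : ℕ} (S : Set (Fin d → ℤ)) : Set (Fin d → ℤ) := S ∪ outerBd S

/-- `fill U`: union of `U` with all finite connected components of its complement. -/
def fill {d : ℕ} (U : Set (Fin d → ℤ)) : Set (Fin d → ℤ) :=
  U ∪ {x | x ∉ U ∧ (connComp Uᶜ x).Finite}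

/-- `Surr U A`: `U` is surrounded by `A`, i.e. every infinite connected set meeting `U`
meets `A`. -/
def Surr {d : ℕ} (U A : Set (Fin d → ℤ)) : Prop :=
  ∀ S : Set (Fin d → ℤ), S.Infinite → ConnectedSet S → (S ∩ U).Nonempty → (S ∩ A).Nonempty

/-- Euclidean norm of a lattice point. -/
noncomputable def eucNorm {d : ℕ} (x : Fin d → ℤ) : ℝ :=
  Real.sqrt (∑ i : Fin d, ((x i : ℝ)) ^ 2)

/-- The range of a path of length `k`. -/
def pathPts {d : ℕ} (γ : ℕ → Fin d → ℤ) (k : ℕ) : Set (Fin d → ℤ) :=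
  {p | ∃ i ≤ k, γ i = p}

namespace ExtBdAux

variable {d : ℕ}

/-- Generic path predicate over an adjacency relation. -/
def GPath (Adj : (Fin d → ℤ) → (Fin d → ℤ) → Prop) (S : Set (Fin d → ℤ))
    (γ : ℕ → Fin d → ℤ) (k : ℕ) : Prop :=
  (∀ i ≤ k, γ i ∈ S) ∧ ∀ i < k, Adj (γ i) (γ (i + 1))

def GConn (Adj : (Fin d → ℤ) → (Fin d → ℤ) → Prop) (S : Set (Fin d → ℤ))
    (x y : Fin d → ℤ) : Prop :=
  ∃ (γ : ℕ → Fin d → ℤ) (k : ℕ), GPath Adj S γ k ∧ γ 0 = x ∧ γ k = y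

variable {Adj : (Fin d → ℤ) → (Fin d → ℤ) → Prop} {S T : Set (Fin d → ℤ)}
  {x y z w : Fin d → ℤ}

lemma gconn_refl (hx : x ∈ S) : GConn Adj S x x :=
  ⟨fun _ => x, 0, ⟨fun _ _ => hx, fun i h => absurd h (Nat.not_lt_zero i)⟩, rfl, rfl⟩

lemma gconn_mem_left (h : GConn Adj S x y) : x ∈ S := by
  obtain ⟨γ, k, ⟨hmem, -⟩, h0, -⟩ := h
  simpa [h0] using hmem 0 (Nat.zero_le _)

lemma gconn_mem_right (h : GConn Adj S x y) : y ∈ S := by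
  obtain ⟨γ, k, ⟨hmem, -⟩, -, hk⟩ := h
  simpa [hk] using hmem k le_rfl

lemma gconn_single (hx : x ∈ S) (hy : y ∈ S) (hxy : Adj x y) : GConn Adj S x y := by
  refine ⟨fun i => if i = 0 then x else y, 1, ⟨?_, ?_⟩, by simp, by simp⟩
  · intro i hi
    by_cases h : i = 0 <;> simp [h, hx, hy]
  · intro i hi
    interval_cases i
    simpa using hxy

lemma gconn_trans (h₁ : GConn Adj S x y) (h₂ : GConn Adj S y z) : GConn Adj S x z := by
  obtain ⟨γ₁, k₁, ⟨hm₁, ha₁⟩, h10, h1k⟩ := h₁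
  obtain ⟨γ₂, k₂, ⟨hm₂, ha₂⟩, h20, h2k⟩ := h₂
  refine ⟨fun i => if i ≤ k₁ then γ₁ i else γ₂ (i - k₁), k₁ + k₂, ⟨?_, ?_⟩, ?_, ?_⟩
  · intro i hi
    by_cases h : i ≤ k₁
    · simp only [h, if_pos]; exact hm₁ i h
    · simp only [h, if_neg]; exact hm₂ (i - k₁) (by omega)
  · intro i hi
    by_cases h : i + 1 ≤ k₁
    · have h' : i ≤ k₁ := by omega
      simp only [h, h', if_pos]
      exact ha₁ i (by omega)
    · by_cases h' : i ≤ k₁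
      · have hik : i = k₁ := by omega
        simp only [h, h', if_pos, if_neg]
        subst hik
        have : γ₁ i = γ₂ 0 := by rw [h1k, ← h20]
        rw [this]
        have := ha₂ 0 (by omega)
        simpa [show i + 1 - i = 1 by omega] using this
      · simp only [h, h', if_neg]
        have : i + 1 - k₁ = (i - k₁) + 1 := by omega
        rw [this]
        exact ha₂ (i - k₁) (by omega)
  · simp [h10]
  · by_cases h : k₁ + k₂ ≤ k₁
    · have : k₂ = 0 := by omega
      subst this
      simp only [Nat.add_zero, le_refl, if_pos]
      rw [h1k, ← h20, ← h2k]
    · simp only [h, if_neg]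
      simpa [show k₁ + k₂ - k₁ = k₂ by omega] using h2k

lemma gconn_symm (hAdj : ∀ a b, Adj a b → Adj b a) (h : GConn Adj S x y) :
    GConn Adj S y x := by
  obtain ⟨γ, k, ⟨hm, ha⟩, h0, hk⟩ := h
  refine ⟨fun i => γ (k - i), k, ⟨fun i hi => hm _ (by omega), ?_⟩, by simp [hk], by simp [h0]⟩
  intro i hi
  have h1 : k - i = (k - (i + 1)) + 1 := by omega
  have := ha (k - (i + 1)) (by omega)
  rw [← h1] at this
  exact hAdj _ _ this

lemma gconn_snoc (h : GConn Adj S x y) (hyz : Adj y z) (hz : z ∈ S) : GConn Adj S x z :=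
  gconn_trans h (gconn_single (gconn_mem_right h) hz hyz)

lemma gconn_cons (hx : x ∈ S) (hxy : Adj x y) (h : GConn Adj S y z) : GConn Adj S x z :=
  gconn_trans (gconn_single hx (gconn_mem_left h) hxy) h

lemma gconn_mono (hST : S ⊆ T) (h : GConn Adj S x y) : GConn Adj T x y := by
  obtain ⟨γ, k, ⟨hm, ha⟩, h0, hk⟩ := h
  exact ⟨γ, k, ⟨fun i hi => hST (hm i hi), ha⟩, h0, hk⟩

lemma gpath_prefix {γ : ℕ → Fin d → ℤ} {k : ℕ} (h : GPath Adj S γ k) (i : ℕ) (hi : i ≤ k) :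
    GConn Adj S (γ 0) (γ i) :=
  ⟨γ, i, ⟨fun j hj => h.1 j (le_trans hj hi), fun j hj => h.2 j (by omega)⟩, rfl, rfl⟩

/-- `ConnIn` is definitionally `GConn latAdj`. -/
lemma connIn_iff : ConnIn S x y ↔ GConn latAdj S x y := Iff.rfl

lemma starConnIn_iff : StarConnIn S x y ↔ GConn latAdjStar S x y := Iff.rfl

lemma latAdj_symm (h : latAdj x y) : latAdj y x := by
  unfold latAdj at *
  rw [← h]
  exact Finset.sum_congr rfl fun i _ => abs_sub_comm _ _

lemma latAdjStar_symm (h : latAdjStar x y) : latAdjStar y x :=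
  ⟨fun e => h.1 e.symm, fun i => by rw [abs_sub_comm]; exact h.2 i⟩

end ExtBdAux

namespace ExtBdAux

variable {d : ℕ} {x y s t : Fin d → ℤ}

/-- A unit step: sum of coordinate absolute values is 1. -/
def unitStep (s : Fin d → ℤ) : Prop := (∑ i : Fin d, |s i|) = 1

lemma latAdj_iff_unitStep : latAdj x y ↔ unitStep (y - x) := by
  unfold latAdj unitStep
  constructor <;> intro h <;> rw [← h] <;>
    exact Finset.sum_congr rfl fun i _ => by simp [abs_sub_comm]

lemma unitStep.abs_le (hs : unitStep s) (i : Fin d) : |s i| ≤ 1 := by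
  rw [← hs]
  exact Finset.single_le_sum (fun j _ => abs_nonneg (s j)) (Finset.mem_univ i)

lemma unitStep.eq_zero_of_ne (hs : unitStep s) {i j : Fin d} (hij : s i ≠ 0) (h : j ≠ i) :
    s j = 0 := by
  by_contra hj
  have h1 : 0 < |s i| := abs_pos.2 hij
  have h2 : 0 < |s j| := abs_pos.2 hj
  have : (2 : ℤ) ≤ ∑ m : Fin d, |s m| := by
    calc (2:ℤ) ≤ |s i| + |s j| := by omega
    _ = ∑ m ∈ ({i, j} : Finset (Fin d)), |s m| := by
        rw [Finset.sum_pair (Ne.symm h)]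
    _ ≤ ∑ m : Fin d, |s m| := Finset.sum_le_sum_of_subset_of_nonneg
        (Finset.subset_univ _) (fun m _ _ => abs_nonneg _)
  rw [hs] at this
  omega

lemma unitStep.neg (hs : unitStep s) : unitStep (-s) := by
  unfold unitStep at *
  rw [← hs]
  exact Finset.sum_congr rfl fun i _ => by simp

lemma unitStep.ne_zero (hs : unitStep s) : s ≠ 0 := by
  intro h
  rw [h] at hs
  simp [unitStep] at hs

/-- Two distinct non-opposite unit steps have disjoint supports. -/
lemma unitStep.disjoint_support (hs : unitStep s) (ht : unitStep t) (h1 : t ≠ s)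
    (h2 : t ≠ -s) (i : Fin d) : s i = 0 ∨ t i = 0 := by
  by_contra hc
  push_neg at hc
  obtain ⟨hsi, hti⟩ := hc
  have hs1 : |s i| = 1 := by have h := hs.abs_le i; have := abs_pos.2 hsi; omega
  have ht1 : |t i| = 1 := by have h := ht.abs_le i; have := abs_pos.2 hti; omega
  have hcoord : ∀ j, j ≠ i → (s j = 0 ∧ t j = 0) := fun j hj =>
    ⟨hs.eq_zero_of_ne hsi hj, ht.eq_zero_of_ne hti hj⟩
  have : t = s ∨ t = -s := by
    by_cases hts : t i = s i
    · left
      funext j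
      rcases eq_or_ne j i with rfl | hj
      · exact hts
      · rw [(hcoord j hj).1, (hcoord j hj).2]
    · right
      funext j
      rcases eq_or_ne j i with rfl | hj
      · have hso := (abs_eq (by norm_num : (0:ℤ) ≤ 1)).1 hs1
        have hto := (abs_eq (by norm_num : (0:ℤ) ≤ 1)).1 ht1
        simp only [Pi.neg_apply]
        omega
      · simp [Pi.neg_apply, (hcoord j hj).1, (hcoord j hj).2]
  tauto

lemma latAdj_add_unitStep (hs : unitStep s) : latAdj x (x + s) := by
  rw [latAdj_iff_unitStep]
  simpa using hs

/-- Any two lattice points are connected in the full lattice. -/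
lemma connIn_univ (x y : Fin d → ℤ) : ConnIn (Set.univ : Set (Fin d → ℤ)) x y := by
  rw [connIn_iff]
  generalize hn : (∑ i : Fin d, (x i - y i).natAbs) = n
  induction n using Nat.strong_induction_on generalizing x with
  | _ n ih =>
    by_cases hxy : x = y
    · subst hxy; exact gconn_refl (Set.mem_univ x)
    · have : ∃ i, x i ≠ y i := by
        by_contra h
        push_neg at h
        exact hxy (funext h)
      obtain ⟨i, hi⟩ := this
      set e : Fin d → ℤ := fun j => if j = i then (if x i < y i then 1 else -1) else 0 with he
      have heu : unitStep e := by
        unfold unitStep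
        rw [Finset.sum_eq_single i]
        · by_cases h : x i < y i <;> simp [he, h]
        · intro j _ hj; simp [he, hj]
        · simp
      have hstep : latAdj x (x + e) := latAdj_add_unitStep heu
      have hdec : (∑ j : Fin d, ((x + e) j - y j).natAbs) < n := by
        rw [← hn]
        have hsplit : ∀ z : Fin d → ℤ, (∑ j : Fin d, (z j - y j).natAbs) =
            (z i - y i).natAbs + ∑ j ∈ Finset.univ.erase i, (z j - y j).natAbs := by
          intro z
          exact (Finset.add_sum_erase _ _ (Finset.mem_univ i)).symm
        rw [hsplit x, hsplit (x + e)]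
        have h1 : ∀ j ∈ Finset.univ.erase i, ((x + e) j - y j).natAbs = (x j - y j).natAbs := by
          intro j hj
          have : j ≠ i := (Finset.mem_erase.1 hj).1
          simp [he, this]
        rw [Finset.sum_congr rfl h1]
        have h2 : ((x + e) i - y i).natAbs < (x i - y i).natAbs := by
          have : (x + e) i = x i + (if x i < y i then 1 else -1) := by simp [he]
          rw [this]
          by_cases h : x i < y i <;> simp [h] <;> omega
        omega
      exact gconn_cons (Set.mem_univ x) hstep (ih _ hdec (x + e) rfl)

end ExtBdAux

namespace ExtBdAux

variable {d : ℕ} {A K : Set (Fin d → ℤ)} {x y s t : Fin d → ℤ}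

open Classical in
/-- Indicator of membership in `K`. -/
noncomputable def ind (K : Set (Fin d → ℤ)) (q : Fin d → ℤ) : ℕ := if q ∈ K then 1 else 0

open Classical in
/-- Count of `K`-marked crossings of the edge `(x, y)` over the cut `∂A`. -/
noncomputable def edgeCnt (A K : Set (Fin d → ℤ)) (x y : Fin d → ℤ) : ℕ :=
  (if x ∈ A ∧ y ∉ A then ind K y else 0) + (if y ∈ A ∧ x ∉ A then ind K x else 0)

open Classical in
noncomputable def crossCnt (A : Set (Fin d → ℤ)) (x y : Fin d → ℤ) : ℕ :=
  (if x ∈ A ∧ y ∉ A then 1 else 0) + (if y ∈ A ∧ x ∉ A then 1 else 0)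

lemma edgeCnt_comm : edgeCnt A K x y = edgeCnt A K y x := add_comm _ _

lemma edgeCnt_eq_zero (h : x ∈ A ↔ y ∈ A) : edgeCnt A K x y = 0 := by
  by_cases hx : x ∈ A
  · simp [edgeCnt, hx, h.1 hx]
  · have hy : y ∉ A := fun hy => hx (h.2 hy)
    simp [edgeCnt, hx, hy]

lemma ind_eq_one (h : x ∈ K) : ind K x = 1 := by simp [ind, h]

/-- The condition on `K` we need: membership transfers along `ℓ^∞`-close points of the
outer boundary of `A`. -/
def GoodK (A K : Set (Fin d → ℤ)) : Prop :=
  ∀ q q' : Fin d → ℤ, q ∈ outerBd A → q' ∈ outerBd A → (∀ i, |q i - q' i| ≤ 1) →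
    (q ∈ K ↔ q' ∈ K)

noncomputable def walkCnt (A K : Set (Fin d → ℤ)) :
    (Fin d → ℤ) → List (Fin d → ℤ) → ℕ
  | _, [] => 0
  | x, s :: L => edgeCnt A K x (x + s) + walkCnt A K (x + s) L

@[simp] lemma walkCnt_nil : walkCnt A K x [] = 0 := rfl

@[simp] lemma walkCnt_cons (L : List (Fin d → ℤ)) :
    walkCnt A K x (s :: L) = edgeCnt A K x (x + s) + walkCnt A K (x + s) L := rfl

lemma walkCnt_append (L₁ L₂ : List (Fin d → ℤ)) (x : Fin d → ℤ) :
    walkCnt A K x (L₁ ++ L₂) = walkCnt A K x L₁ + walkCnt A K (x + L₁.sum) L₂ := by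
  induction L₁ generalizing x with
  | nil => simp
  | cons s L₁ ih =>
    simp only [List.cons_append, walkCnt_cons, ih (x + s), List.sum_cons]
    have h : x + s + L₁.sum = x + (s + L₁.sum) := by abel
    rw [h, Nat.add_assoc]

/-- The square-parity lemma: swapping the order of two steps of a unit square does not
change the parity of the marked crossing count. -/
lemma edgeCnt_square (hK : GoodK A K) (hs : unitStep s) (ht : unitStep t)
    (hd : ∀ i, s i = 0 ∨ t i = 0) (x : Fin d → ℤ) :
    (edgeCnt A K x (x + s) + edgeCnt A K (x + s) (x + s + t)) % 2
      = (edgeCnt A K x (x + t) + edgeCnt A K (x + t) (x + s + t)) % 2 := by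
  have hbs : ∀ i, -1 ≤ s i ∧ s i ≤ 1 := fun i => abs_le.1 (hs.abs_le i)
  have hbt : ∀ i, -1 ≤ t i ∧ t i ≤ 1 := fun i => abs_le.1 (ht.abs_le i)
  -- pairwise closeness of the four corners
  have hcl : ∀ p q : Fin d → ℤ,
      (p = x ∨ p = x + s ∨ p = x + t ∨ p = x + s + t) →
      (q = x ∨ q = x + s ∨ q = x + t ∨ q = x + s + t) → ∀ i, |p i - q i| ≤ 1 := by
    intro p q hp hq i
    obtain ⟨h1, h2⟩ := hbs i
    obtain ⟨h3, h4⟩ := hbt i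
    rcases hd i with h5 | h5 <;>
      rcases hp with rfl | rfl | rfl | rfl <;> rcases hq with rfl | rfl | rfl | rfl <;>
        (rw [abs_le]; constructor <;> ((try simp only [Pi.add_apply]); omega))
  -- adjacency facts
  have hab : latAdj x (x + s) := latAdj_add_unitStep hs
  have hac : latAdj x (x + t) := latAdj_add_unitStep ht
  have hbe : latAdj (x + s) (x + s + t) := latAdj_add_unitStep ht
  have hce : latAdj (x + t) (x + s + t) := by
    have h : x + s + t = (x + t) + s := by abel
    rw [h]
    exact latAdj_add_unitStep hs
  by_cases hex : ∃ q : Fin d → ℤ, (q = x ∨ q = x + s ∨ q = x + t ∨ q = x + s + t) ∧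
      q ∈ outerBd A ∧ q ∈ K
  · obtain ⟨q₀, hq₀mem, hq₀bd, hq₀K⟩ := hex
    have hall : ∀ p z : Fin d → ℤ, (p = x ∨ p = x + s ∨ p = x + t ∨ p = x + s + t) →
        p ∉ A → z ∈ A → latAdj p z → p ∈ K := by
      intro p z hp hpA hzA hadj
      have hpbd : p ∈ outerBd A := ⟨hpA, z, hzA, hadj⟩
      exact (hK p q₀ hpbd hq₀bd (hcl p q₀ hp hq₀mem)).2 hq₀K
    have heval : ∀ p q : Fin d → ℤ, (p = x ∨ p = x + s ∨ p = x + t ∨ p = x + s + t) →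
        (q = x ∨ q = x + s ∨ q = x + t ∨ q = x + s + t) → latAdj p q →
        edgeCnt A K p q = crossCnt A p q := by
      intro p q hp hq hadj
      by_cases hpA : p ∈ A <;> by_cases hqA : q ∈ A
      · simp [edgeCnt, crossCnt, hpA, hqA]
      · have : q ∈ K := hall q p hq hqA hpA (latAdj_symm hadj)
        simp [edgeCnt, crossCnt, hpA, hqA, ind_eq_one this]
      · have : p ∈ K := hall p q hp hpA hqA hadj
        simp [edgeCnt, crossCnt, hpA, hqA, ind_eq_one this]
      · simp [edgeCnt, crossCnt, hpA, hqA]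
    rw [heval x (x + s) (by tauto) (by tauto) hab,
      heval (x + s) (x + s + t) (by tauto) (by tauto) hbe,
      heval x (x + t) (by tauto) (by tauto) hac,
      heval (x + t) (x + s + t) (by tauto) (by tauto) hce]
    by_cases hA : x ∈ A <;> by_cases hB : x + s ∈ A <;> by_cases hC : x + t ∈ A <;>
      by_cases hE : x + s + t ∈ A <;> simp [crossCnt, hA, hB, hC, hE]
  · push_neg at hex
    have hzero : ∀ p q : Fin d → ℤ, (p = x ∨ p = x + s ∨ p = x + t ∨ p = x + s + t) →
        (q = x ∨ q = x + s ∨ q = x + t ∨ q = x + s + t) → latAdj p q →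
        edgeCnt A K p q = 0 := by
      intro p q hp hq hadj
      by_cases hpA : p ∈ A <;> by_cases hqA : q ∈ A
      · simp [edgeCnt, hpA, hqA]
      · have : q ∉ K := fun hqK => hex q hq ⟨hqA, p, hpA, latAdj_symm hadj⟩ hqK
        simp [edgeCnt, ind, hpA, hqA, this]
      · have : p ∉ K := fun hpK => hex p hp ⟨hpA, q, hqA, hadj⟩ hpK
        simp [edgeCnt, ind, hpA, hqA, this]
      · simp [edgeCnt, hpA, hqA]
    rw [hzero x (x + s) (by tauto) (by tauto) hab,
      hzero (x + s) (x + s + t) (by tauto) (by tauto) hbe,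
      hzero x (x + t) (by tauto) (by tauto) hac,
      hzero (x + t) (x + s + t) (by tauto) (by tauto) hce]

lemma walkCnt_swap (hK : GoodK A K) (hs : unitStep s) (ht : unitStep t)
    (L : List (Fin d → ℤ)) (x : Fin d → ℤ) :
    walkCnt A K x (s :: t :: L) % 2 = walkCnt A K x (t :: s :: L) % 2 := by
  rcases eq_or_ne t s with rfl | hts
  · rfl
  rcases eq_or_ne t (-s) with rfl | hts'
  · simp only [walkCnt_cons]
    have h1 : x + s + -s = x := by abel
    have h2 : x + -s + s = x := by abel
    rw [h1, h2]
    have e1 : edgeCnt A K (x + s) x = edgeCnt A K x (x + s) := edgeCnt_comm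
    have e2 : edgeCnt A K (x + -s) x = edgeCnt A K x (x + -s) := edgeCnt_comm
    omega
  · have hd := unitStep.disjoint_support hs ht hts hts'
    have hsq := edgeCnt_square hK hs ht hd x
    simp only [walkCnt_cons]
    have h3 : x + t + s = x + s + t := by abel
    rw [h3]
    omega

lemma walkCnt_mtf (hK : GoodK A K) :
    ∀ (L : List (Fin d → ℤ)) (t x : Fin d → ℤ), (∀ v ∈ L, unitStep v) → t ∈ L →
      walkCnt A K x L % 2 = walkCnt A K x (t :: L.erase t) % 2 := by
  intro L
  induction L with
  | nil => intro t x _ h; simp at h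
  | cons a L' ih =>
    intro t x hL htL
    rcases eq_or_ne a t with rfl | hat
    · rw [List.erase_cons_head]
    · have htL' : t ∈ L' := by
        rcases List.mem_cons.1 htL with h | h
        · exact absurd h.symm hat
        · exact h
      rw [List.erase_cons_tail (by simpa using fun h => hat h)]
      have ha : unitStep a := hL a List.mem_cons_self
      have ht : unitStep t := hL t htL
      have ih' := ih t (x + a) (fun v hv => hL v (List.mem_cons_of_mem _ hv)) htL'
      have hswap := walkCnt_swap hK ha ht (L'.erase t) x
      simp only [walkCnt_cons] at ih' hswap ⊢
      omega

lemma exists_neg_mem {L : List (Fin d → ℤ)} (hs : unitStep s)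
    (hL : ∀ v ∈ L, unitStep v) (hsum : s + L.sum = 0) : (-s) ∈ L := by
  obtain ⟨j, hj⟩ : ∃ j, s j ≠ 0 := by
    by_contra h
    push_neg at h
    exact hs.ne_zero (funext h)
  have hsj : |s j| = 1 := by have h := hs.abs_le j; have := abs_pos.2 hj; omega
  by_contra hmem
  have hv : ∀ v ∈ L, s j * v j = 0 ∨ s j * v j = 1 := by
    intro v hvL
    rcases eq_or_ne (v j) 0 with h0 | h0
    · left; rw [h0]; ring
    · have hvj : |v j| = 1 := by have h := (hL v hvL).abs_le j; have := abs_pos.2 h0; omega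
      have hcase : v j = s j ∨ v j = -(s j) := by
        have h1 := (abs_eq (by norm_num : (0:ℤ) ≤ 1)).1 hsj
        have h2 := (abs_eq (by norm_num : (0:ℤ) ≤ 1)).1 hvj
        omega
      rcases hcase with h | h
      · right
        rw [h]
        rcases (abs_eq (by norm_num : (0:ℤ) ≤ 1)).1 hsj with h' | h' <;> rw [h'] <;> ring
      · exfalso
        apply hmem
        have hveq : v = -s := by
          funext m
          rcases eq_or_ne m j with rfl | hm
          · simpa using h
          · rw [(hL v hvL).eq_zero_of_ne h0 hm]
            simp [hs.eq_zero_of_ne hj hm]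
        rw [← hveq]
        exact hvL
  have key : ∀ M : List (Fin d → ℤ), (∀ v ∈ M, s j * v j = 0 ∨ s j * v j = 1) →
      0 ≤ s j * (M.sum j) := by
    intro M
    induction M with
    | nil => intro _; simp
    | cons v M ihM =>
      intro hM
      have h1 := hM v List.mem_cons_self
      have h2 := ihM (fun w hw => hM w (List.mem_cons_of_mem _ hw))
      have h3 : (v :: M).sum j = v j + M.sum j := by simp [List.sum_cons]
      rw [h3, mul_add]
      rcases h1 with h | h <;> linarith
  have hLsum : L.sum j = -(s j) := by
    have h := congrFun hsum j
    simp only [Pi.add_apply, Pi.zero_apply] at h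
    omega
  have hfin := key L hv
  rw [hLsum] at hfin
  rcases (abs_eq (by norm_num : (0:ℤ) ≤ 1)).1 hsj with h | h <;> rw [h] at hfin <;>
    norm_num at hfin

/-- The main parity theorem: along a closed unit-step walk, the number of marked
crossings of the cut `∂A` is even. -/
lemma walkCnt_even (hK : GoodK A K) :
    ∀ (n : ℕ) (L : List (Fin d → ℤ)), L.length ≤ n → (∀ v ∈ L, unitStep v) →
      L.sum = 0 → ∀ x, walkCnt A K x L % 2 = 0 := by
  intro n
  induction n with
  | zero =>
    intro L hlen _ _ x
    rw [List.length_eq_zero_iff.1 (Nat.le_zero.1 hlen)]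
    rfl
  | succ n ih =>
    intro L hlen hL hsum x
    cases L with
    | nil => rfl
    | cons v L' =>
      have hs : unitStep v := hL v List.mem_cons_self
      have hsum' : v + L'.sum = 0 := by simpa [List.sum_cons] using hsum
      have hmem : (-v) ∈ L' := exists_neg_mem hs (fun w hw => hL w (List.mem_cons_of_mem _ hw)) hsum'
      have hmtf := walkCnt_mtf hK L' (-v) (x + v)
        (fun w hw => hL w (List.mem_cons_of_mem _ hw)) hmem
      have hL'sum : L'.sum = -v := (neg_eq_of_add_eq_zero_right hsum').symm
      have herasesum : (L'.erase (-v)).sum = 0 := by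
        have hperm : List.Perm L' ((-v) :: L'.erase (-v)) := List.perm_cons_erase hmem
        have h := hperm.sum_eq
        rw [hL'sum, List.sum_cons] at h
        have h2 : (-v) + (L'.erase (-v)).sum = -v + 0 := by rw [add_zero]; exact h.symm
        exact add_left_cancel h2
      have heraselen : (L'.erase (-v)).length ≤ n := by
        have h1 : (L'.erase (-v)).length = L'.length - 1 := List.length_erase_of_mem hmem
        have h2 : L'.length + 1 ≤ n + 1 := by simpa using hlen
        omega
      have heraseunit : ∀ w ∈ L'.erase (-v), unitStep w := fun w hw =>
        hL w (List.mem_cons_of_mem _ (List.erase_subset hw))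
      have hih := ih (L'.erase (-v)) heraselen heraseunit herasesum x
      have hxs : x + v + -v = x := by abel
      have hcomm : edgeCnt A K (x + v) x = edgeCnt A K x (x + v) := edgeCnt_comm
      simp only [walkCnt_cons, hxs] at hmtf ⊢
      omega

/-- Steps of a path. -/
def stepsOf (γ : ℕ → Fin d → ℤ) (k : ℕ) : List (Fin d → ℤ) :=
  (List.range k).map fun i => γ (i + 1) - γ i

lemma stepsOf_succ (γ : ℕ → Fin d → ℤ) (k : ℕ) :
    stepsOf γ (k + 1) = stepsOf γ k ++ [γ (k + 1) - γ k] := by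
  simp [stepsOf, List.range_succ]

lemma stepsOf_sum (γ : ℕ → Fin d → ℤ) (k : ℕ) : (stepsOf γ k).sum = γ k - γ 0 := by
  induction k with
  | zero => simp [stepsOf]
  | succ k ih =>
    rw [stepsOf_succ, List.sum_append, ih, List.sum_cons, List.sum_nil]
    abel

lemma stepsOf_units {γ : ℕ → Fin d → ℤ} {k : ℕ} (h : ∀ i < k, latAdj (γ i) (γ (i + 1))) :
    ∀ v ∈ stepsOf γ k, unitStep v := by
  intro v hv
  simp only [stepsOf, List.mem_map, List.mem_range] at hv
  obtain ⟨i, hi, rfl⟩ := hv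
  exact latAdj_iff_unitStep.1 (h i hi)

lemma walkCnt_path_zero {γ : ℕ → Fin d → ℤ} {k : ℕ}
    (hside : ∀ i ≤ k, (γ i ∈ A ↔ γ 0 ∈ A)) :
    walkCnt A K (γ 0) (stepsOf γ k) = 0 := by
  induction k with
  | zero => simp [stepsOf]
  | succ k ih =>
    rw [stepsOf_succ, walkCnt_append, ih (fun i hi => hside i (by omega))]
    have hp : γ 0 + (stepsOf γ k).sum = γ k := by rw [stepsOf_sum]; abel
    rw [hp]
    have hq : γ k + (γ (k + 1) - γ k) = γ (k + 1) := by abel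
    simp only [walkCnt_cons, walkCnt_nil, hq, Nat.add_zero, Nat.zero_add]
    rw [edgeCnt_eq_zero ((hside k (by omega)).trans (hside (k+1) le_rfl).symm)]

end ExtBdAux

namespace ExtBdAux

variable {d : ℕ}

/-- Main lemma: if `A` and `Aᶜ` are both connected, the outer boundary of `A` is
`*`-connected. -/
lemma star_conn_outerBd {A : Set (Fin d → ℤ)} (hA : ConnectedSet A)
    (hAc : ConnectedSet Aᶜ) : StarConnectedSet (outerBd A) := by
  intro x hx y hy
  obtain ⟨hxA, a, haA, hxa⟩ := hx
  obtain ⟨hyA, b, hbA, hyb⟩ := hy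
  set K : Set (Fin d → ℤ) := starConnComp (outerBd A) x with hKdef
  have hxbd : x ∈ outerBd A := ⟨hxA, a, haA, hxa⟩
  have hybd : y ∈ outerBd A := ⟨hyA, b, hbA, hyb⟩
  have hGood : GoodK A K := by
    intro q q' hq hq' hclose
    constructor
    · intro hqK
      rcases eq_or_ne q q' with rfl | hne
      · exact hqK
      · exact gconn_snoc (Adj := latAdjStar) hqK ⟨hne, hclose⟩ hq'
    · intro hqK
      rcases eq_or_ne q q' with rfl | hne
      · exact hqK
      · exact gconn_snoc (Adj := latAdjStar) hqK
          ⟨fun h => hne h.symm, fun i => by rw [abs_sub_comm]; exact hclose i⟩ hq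
  have hxK : x ∈ K := gconn_refl (Adj := latAdjStar) hxbd
  obtain ⟨γ₁, k₁, hP₁, h10, h1k⟩ := hAc x hxA y hyA
  obtain ⟨γ₂, k₂, hP₂, h20, h2k⟩ := hA b hbA a haA
  set L : List (Fin d → ℤ) :=
    stepsOf γ₁ k₁ ++ ([b - y] ++ (stepsOf γ₂ k₂ ++ [x - a])) with hLdef
  have hu : ∀ v ∈ L, unitStep v := by
    intro v hv
    rw [hLdef] at hv
    simp only [List.mem_append, List.mem_singleton] at hv
    rcases hv with h | h | h | h
    · exact stepsOf_units hP₁.2 v h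
    · rw [h]; exact latAdj_iff_unitStep.1 hyb
    · exact stepsOf_units hP₂.2 v h
    · rw [h]; exact latAdj_iff_unitStep.1 (latAdj_symm hxa)
  have hsum : L.sum = 0 := by
    rw [hLdef]
    simp only [List.sum_append, List.sum_cons, List.sum_nil, stepsOf_sum, h10, h1k, h20, h2k]
    abel
  have heven := walkCnt_even hGood L.length L le_rfl hu hsum x
  have e1 : walkCnt A K x (stepsOf γ₁ k₁) = 0 := by
    have hside : ∀ i ≤ k₁, (γ₁ i ∈ A ↔ γ₁ 0 ∈ A) :=
      fun i hi => iff_of_false (hP₁.1 i hi) (by rw [h10]; exact hxA)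
    have h := walkCnt_path_zero (A := A) (K := K) hside
    rwa [h10] at h
  have e2 : x + (stepsOf γ₁ k₁).sum = y := by rw [stepsOf_sum, h10, h1k]; abel
  have e3 : walkCnt A K b (stepsOf γ₂ k₂) = 0 := by
    have hside : ∀ i ≤ k₂, (γ₂ i ∈ A ↔ γ₂ 0 ∈ A) :=
      fun i hi => iff_of_true (hP₂.1 i hi) (by rw [h20]; exact hbA)
    have h := walkCnt_path_zero (A := A) (K := K) hside
    rwa [h20] at h
  have e4 : b + (stepsOf γ₂ k₂).sum = a := by rw [stepsOf_sum, h20, h2k]; abel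
  have e5 : y + (b - y) = b := by abel
  have e6 : a + (x - a) = x := by abel
  have hwc : walkCnt A K x L = ind K y + 1 := by
    rw [hLdef, walkCnt_append, e1, e2, walkCnt_append]
    have h5 : y + ([b - y] : List (Fin d → ℤ)).sum = b := by
      simp only [List.sum_cons, List.sum_nil, add_zero]; abel
    rw [h5, walkCnt_append, e3, e4]
    simp only [walkCnt_cons, walkCnt_nil, e5, e6]
    have hby : edgeCnt A K y b = ind K y := by simp [edgeCnt, hyA, hbA]
    have hax : edgeCnt A K a x = 1 := by
      simp [edgeCnt, haA, hxA, ind_eq_one hxK]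
    rw [hby, hax]
    omega
  rw [hwc] at heven
  have hyK : y ∈ K := by
    by_contra hyK
    have : ind K y = 0 := by simp [ind, hyK]
    omega
  exact hyK

/-- Paths inside a connected component stay inside the component. -/
lemma gconn_comp {Adj : (Fin d → ℤ) → (Fin d → ℤ) → Prop}
    (hAdjSymm : ∀ a b, Adj a b → Adj b a) {S : Set (Fin d → ℤ)} {x₀ z w : Fin d → ℤ}
    (hz : GConn Adj S x₀ z) (hw : GConn Adj S x₀ w) :
    GConn Adj {p | GConn Adj S x₀ p} z w := by
  obtain ⟨γ, k, hp, h0, hk⟩ := gconn_trans (gconn_symm hAdjSymm hz) hw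
  refine ⟨γ, k, ⟨fun i hi => ?_, hp.2⟩, h0, hk⟩
  have h := gpath_prefix hp i hi
  rw [h0] at h
  exact gconn_trans hz h

end ExtBdAux

open ExtBdAux in
/-- If `U ⊆ ℤ^d` is a finite nonempty connected set such that `Uᶜ` has a unique infinite
connected component `C`, then the exterior boundary of `U` (the inner boundary of `C`)
is nonempty and `*`-connected. -/
theorem extBd_nonempty_starConnected {d : ℕ} (U C : Set (Fin d → ℤ))
    (hUfin : U.Finite) (hUne : U.Nonempty) (hUconn : ConnectedSet U)
    (hC : ∃ x, x ∉ U ∧ C = connComp Uᶜ x) (hCinf : C.Infinite)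
    (huniq : ∀ x, x ∉ U → (connComp Uᶜ x).Infinite → connComp Uᶜ x = C) :
    (innerBd C).Nonempty ∧ StarConnectedSet (innerBd C) := by
  classical
  obtain ⟨x₀, hx₀U, hCdef⟩ := hC
  obtain ⟨u₀, hu₀⟩ := hUne
  subst hCdef
  set C : Set (Fin d → ℤ) := connComp Uᶜ x₀ with hCdef
  have hCsubUc : C ⊆ Uᶜ := fun z hz => gconn_mem_right (connIn_iff.1 hz)
  have hUsubCc : U ⊆ Cᶜ := fun u hu hmem => (hCsubUc hmem) hu
  -- C is connected
  have hCconn : ConnectedSet C := by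
    intro z hz w hw
    exact gconn_comp (fun _ _ h => latAdj_symm h) (connIn_iff.1 hz) (connIn_iff.1 hw)
  -- Cᶜ is connected
  have hkey : ∀ z ∈ Cᶜ, ConnIn Cᶜ z u₀ := by
    intro z hz
    rw [Set.mem_compl_iff] at hz
    by_cases hzU : z ∈ U
    · exact gconn_mono hUsubCc (hUconn z hzU u₀ hu₀)
    · -- z is in Uᶜ, in a component other than C
      have hzUc : z ∈ Uᶜ := hzU
      have hKc : ∀ w, GConn latAdj Uᶜ z w → w ∈ Cᶜ := by
        intro w hw hwC
        exact hz (gconn_trans (connIn_iff.1 hwC) (gconn_symm (fun _ _ h => latAdj_symm h) hw))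
      obtain ⟨δ, m, hδ, hδ0, hδm⟩ := connIn_univ z u₀
      have hPex : ∃ j, δ j ∈ U := ⟨m, by rw [hδm]; exact hu₀⟩
      set j := Nat.find hPex with hjdef
      have hjU : δ j ∈ U := Nat.find_spec hPex
      have hjmin : ∀ i < j, δ i ∉ U := fun i hi => Nat.find_min hPex hi
      have hj0 : j ≠ 0 := by
        intro h
        rw [h, hδ0] at hjU
        exact hzU hjU
      have hjm : j ≤ m := Nat.find_le (by rw [hδm]; exact hu₀)
      have hpath1 : GPath latAdj Uᶜ δ (j - 1) :=
        ⟨fun i hi => hjmin i (by omega), fun i hi => hδ.2 i (by omega)⟩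
      have hmemK : ∀ i ≤ j - 1, δ i ∈ Cᶜ := by
        intro i hi
        have h := gpath_prefix hpath1 i hi
        rw [hδ0] at h
        exact hKc (δ i) h
      have hc1 : GConn latAdj Cᶜ z (δ (j - 1)) :=
        ⟨δ, j - 1, ⟨hmemK, fun i hi => hδ.2 i (by omega)⟩, hδ0, rfl⟩
      have hstep : latAdj (δ (j - 1)) (δ j) := by
        have h := hδ.2 (j - 1) (by omega)
        rwa [show j - 1 + 1 = j by omega] at h
      have hc4 : GConn latAdj Cᶜ (δ j) u₀ := gconn_mono hUsubCc (hUconn _ hjU u₀ hu₀)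
      exact gconn_trans (gconn_snoc hc1 hstep (hUsubCc hjU)) hc4
  have hCcconn : ConnectedSet Cᶜ := fun z hz w hw =>
    gconn_trans (hkey z hz) (gconn_symm (fun _ _ h => latAdj_symm h) (hkey w hw))
  -- nonemptiness of the boundary
  have hne : (innerBd C).Nonempty := by
    obtain ⟨z₀, hz₀⟩ := hCinf.nonempty
    obtain ⟨δ, m, hδ, hδ0, hδm⟩ := connIn_univ z₀ u₀
    have hPex : ∃ j, δ j ∉ C := ⟨m, by rw [hδm]; exact hUsubCc hu₀⟩
    set j := Nat.find hPex with hjdef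
    have hjC : δ j ∉ C := Nat.find_spec hPex
    have hjmin : ∀ i < j, δ i ∈ C := fun i hi => not_not.1 (Nat.find_min hPex hi)
    have hj0 : j ≠ 0 := by
      intro h
      rw [h, hδ0] at hjC
      exact hjC hz₀
    have hjm : j ≤ m := Nat.find_le (by rw [hδm]; exact hUsubCc hu₀)
    have hstep : latAdj (δ (j - 1)) (δ j) := by
      have h := hδ.2 (j - 1) (by omega)
      rwa [show j - 1 + 1 = j by omega] at h
    exact ⟨δ (j - 1), hjmin (j - 1) (by omega), δ j, hjC, hstep⟩
  refine ⟨hne, ?_⟩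
  have hbd : innerBd C = outerBd Cᶜ := by
    ext p
    simp [innerBd, outerBd, Set.mem_compl_iff]
  rw [hbd]
  exact star_conn_outerBd hCcconn (by rw [compl_compl]; exact hCconn)
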